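/- Coverage with ties via ranks: if s_1,...,s_{n+1} are exchangeable (ties allowed) then P[ |{i ≤ n : s_i < s_{n+1}}| ≥ k ] ≤ (n+1-k)/(n+1) for every integer k with 1 ≤ k ≤ n+1. -/

import Mathlib

open MeasureTheory ProbabilityTheory Finset
open scoped ENNReal

/-- A finite family of random variables is exchangeable if its joint law is
invariant under every permutation of the indices. -/
def Exchangeable {Ω : Type*} [MeasureSpace Ω] {m : ℕ} {E : Type*} [MeasurableSpace E]
    (s : Fin m → Ω → E) : Prop :=
  ∀ π : Equiv.Perm (Fin m),
    Measure.map (fun ω i => s (π i) ω) (ℙ : Measure Ω) =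
      Measure.map (fun ω i => s i ω) (ℙ : Measure Ω)


private noncomputable def rnk {N : ℕ} (x : Fin N → ℝ) (j : Fin N) : ℕ :=
  (univ.filter fun i => x i < x j ∨ (x i = x j ∧ i < j)).card

private lemma rnk_lt {N : ℕ} (x : Fin N → ℝ) (j : Fin N) : rnk x j < N := by
  have hsub : (univ.filter fun i => x i < x j ∨ (x i = x j ∧ i < j)) ⊆ univ.erase j := by
    intro i hi
    simp only [mem_filter, mem_univ, true_and] at hi
    rcases hi with h | ⟨h, hlt⟩
    · exact mem_erase.2 ⟨fun e => absurd (e ▸ h) (lt_irrefl _), mem_univ _⟩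
    · exact mem_erase.2 ⟨Fin.ne_of_lt hlt, mem_univ _⟩
  calc rnk x j ≤ (univ.erase j).card := card_le_card hsub
    _ < univ.card := card_erase_lt_of_mem (mem_univ j)
    _ = N := by simp

private lemma rnk_lt_rnk {N : ℕ} (x : Fin N → ℝ) {j j' : Fin N}
    (h : x j < x j' ∨ (x j = x j' ∧ j < j')) : rnk x j < rnk x j' := by
  apply card_lt_card
  rw [Finset.ssubset_iff_of_subset]
  · refine ⟨j, by simpa using h, by simp [lt_irrefl]⟩
  intro i hi
  simp only [mem_filter, mem_univ, true_and] at hi ⊢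
  rcases h with h | ⟨he, hlt⟩
  · rcases hi with hi | ⟨hi, _⟩
    · exact Or.inl (hi.trans h)
    · exact Or.inl (hi ▸ h)
  · rcases hi with hi | ⟨hi, hlt'⟩
    · exact Or.inl (he ▸ hi)
    · exact Or.inr ⟨hi.trans he, hlt'.trans hlt⟩

private lemma rnk_inj {N : ℕ} (x : Fin N → ℝ) : Function.Injective (rnk x) := by
  intro j j' h
  by_contra hne
  rcases lt_trichotomy (x j) (x j') with hx | hx | hx
  · exact absurd h (Nat.ne_of_lt (rnk_lt_rnk x (Or.inl hx)))
  · rcases lt_or_gt_of_ne hne with hl | hl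
    · exact absurd h (Nat.ne_of_lt (rnk_lt_rnk x (Or.inr ⟨hx, hl⟩)))
    · exact absurd h.symm (Nat.ne_of_lt (rnk_lt_rnk x (Or.inr ⟨hx.symm, hl⟩)))
  · exact absurd h.symm (Nat.ne_of_lt (rnk_lt_rnk x (Or.inl hx)))

private lemma count_le_rnk {N : ℕ} (x : Fin N → ℝ) (j : Fin N) :
    (univ.filter fun i => x i < x j).card ≤ rnk x j :=
  card_le_card (monotone_filter_right _ (by intro i _ h; exact Or.inl h))

private lemma count_bound {N : ℕ} (x : Fin N → ℝ) (k : ℕ) :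
    (univ.filter fun j : Fin N => k ≤ (univ.filter fun i => x i < x j).card).card ≤ N - k := by
  have h1 : (univ.filter fun j : Fin N => k ≤ (univ.filter fun i => x i < x j).card)
      ⊆ univ.filter fun j => k ≤ rnk x j :=
    monotone_filter_right _ (by intro j _ h; exact h.trans (count_le_rnk x j))
  refine (card_le_card h1).trans ?_
  have himg : univ.image (rnk x) = range N := by
    apply eq_of_subset_of_card_le
    · intro v hv
      simp only [mem_image, mem_univ, true_and] at hv
      obtain ⟨j, rfl⟩ := hv
      exact mem_range.2 (rnk_lt x j)
    · rw [card_range, card_image_of_injective _ (rnk_inj x), card_univ, Fintype.card_fin]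
  have h2 : (univ.filter fun j => k ≤ rnk x j).card
      = ((univ.image (rnk x)).filter fun v => k ≤ v).card := by
    rw [filter_image, card_image_of_injective _ (rnk_inj x)]
  rw [h2, himg]
  have h3 : (range N).filter (fun v => k ≤ v) = Ico k N := by
    ext m; simp [mem_range, mem_Ico, and_comm]
  rw [h3, Nat.card_Ico]


theorem stmt12 {Ω : Type*} [MeasureSpace Ω] [IsProbabilityMeasure (ℙ : Measure Ω)]
    (n : ℕ) (s : Fin (n + 1) → Ω → ℝ) (hmeas : ∀ i, Measurable (s i))
    (hexch : Exchangeable s)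
    (k : ℕ) (hk1 : 1 ≤ k) (hk2 : k ≤ n + 1) :
    ℙ {ω | k ≤ (Finset.univ.filter fun i : Fin n =>
        s i.castSucc ω < s (Fin.last n) ω).card} ≤
      ENNReal.ofReal (((n : ℝ) + 1 - k) / (n + 1)) := by
  classical
  set L : Ω → (Fin (n + 1) → ℝ) := fun ω i => s i ω with hLdef
  have hL : Measurable L := measurable_pi_lambda _ hmeas
  set cnt : (Fin (n + 1) → ℝ) → Fin (n + 1) → ℕ :=
    fun x j => (univ.filter fun i => x i < x j).card with hcnt
  have hcntm : ∀ j, Measurable fun x => cnt x j := by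
    intro j
    have : (fun x => cnt x j)
        = fun x => ∑ i : Fin (n + 1), if x i < x j then 1 else 0 := by
      funext x; exact card_filter _ _
    rw [this]
    exact Finset.measurable_sum _ fun i _ =>
      Measurable.ite (measurableSet_lt (measurable_pi_apply i) (measurable_pi_apply j))
        measurable_const measurable_const
  set B : Fin (n + 1) → Set (Fin (n + 1) → ℝ) := fun j => {x | k ≤ cnt x j} with hBdef
  have hB : ∀ j, MeasurableSet (B j) := fun j =>
    measurableSet_le measurable_const (hcntm j)
  set A : Fin (n + 1) → Set Ω := fun j => L ⁻¹' (B j) with hAdef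
  have hA : ∀ j, MeasurableSet (A j) := fun j => hL (hB j)
  -- exchangeability: all ℙ (A j) equal
  have hkey : ∀ j, ℙ (A j) = ℙ (A (Fin.last n)) := by
    intro j
    set π : Equiv.Perm (Fin (n + 1)) := Equiv.swap j (Fin.last n) with hπ
    have hM : Measurable fun ω (i : Fin (n + 1)) => s (π i) ω :=
      measurable_pi_lambda _ fun i => hmeas (π i)
    have hpre : (fun ω (i : Fin (n + 1)) => s (π i) ω) ⁻¹' (B (Fin.last n)) = A j := by
      ext ω
      simp only [Set.mem_preimage, hAdef, hBdef, Set.mem_setOf_eq, hcnt]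
      have h1 : π (Fin.last n) = j := Equiv.swap_apply_right _ _
      have h2 : (univ.filter fun i => s (π i) ω < s (π (Fin.last n)) ω).card
          = (univ.filter fun i => s i ω < s j ω).card := by
        rw [h1, card_filter, card_filter]
        exact Equiv.sum_comp π (fun i => if s i ω < s j ω then 1 else 0)
      constructor
      · intro h; exact h.trans_eq (by rw [hLdef]; exact h2 ▸ rfl)
      · intro h; rw [← h2] at h; exact h
    calc ℙ (A j) = Measure.map (fun ω i => s (π i) ω) ℙ (B (Fin.last n)) := by
          rw [Measure.map_apply hM (hB _), hpre]
      _ = Measure.map (fun ω i => s i ω) ℙ (B (Fin.last n)) := by rw [hexch π]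
      _ = ℙ (A (Fin.last n)) := by rw [Measure.map_apply hL (hB _)]
  -- sum bound
  have hsum : ∑ j : Fin (n + 1), ℙ (A j) ≤ ((n + 1 - k : ℕ) : ℝ≥0∞) := by
    have e1 : ∀ j : Fin (n + 1), ℙ (A j) = ∫⁻ ω, (A j).indicator 1 ω := fun j =>
      (lintegral_indicator_one (hA j)).symm
    calc ∑ j : Fin (n + 1), ℙ (A j)
        = ∑ j : Fin (n + 1), ∫⁻ ω, (A j).indicator 1 ω :=
          Finset.sum_congr rfl fun j _ => e1 j
      _ = ∫⁻ ω, ∑ j : Fin (n + 1), (A j).indicator 1 ω :=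
          (lintegral_finset_sum _ fun j _ => measurable_one.indicator (hA j)).symm
      _ ≤ ∫⁻ _, ((n + 1 - k : ℕ) : ℝ≥0∞) := by
          apply lintegral_mono
          intro ω
          show (∑ j : Fin (n + 1), (A j).indicator (1 : Ω → ℝ≥0∞) ω) ≤ ((n + 1 - k : ℕ) : ℝ≥0∞)
          have : ∑ j : Fin (n + 1), (A j).indicator (1 : Ω → ℝ≥0∞) ω
              = ((univ.filter fun j : Fin (n + 1) => k ≤ cnt (L ω) j).card : ℝ≥0∞) := by
            rw [card_filter, Nat.cast_sum]
            refine Finset.sum_congr rfl fun j _ => ?_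
            by_cases hj : ω ∈ A j
            · have hj' : k ≤ cnt (L ω) j := hj
              simp [Set.indicator_of_mem hj, hj']
            · have hj' : ¬ k ≤ cnt (L ω) j := hj
              simp [Set.indicator_of_notMem hj, hj']
          rw [this]
          exact_mod_cast Nat.cast_le.2 (count_bound (L ω) k)
      _ = ((n + 1 - k : ℕ) : ℝ≥0∞) := by
          rw [lintegral_const, measure_univ, mul_one]
  have hsumeq : ∑ j : Fin (n + 1), ℙ (A j) = (n + 1 : ℕ) * ℙ (A (Fin.last n)) := by
    rw [Finset.sum_congr rfl fun j _ => hkey j, Finset.sum_const, card_univ,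
      Fintype.card_fin, nsmul_eq_mul]
  -- the target event is A (last n)
  have hev : {ω | k ≤ (Finset.univ.filter fun i : Fin n =>
      s i.castSucc ω < s (Fin.last n) ω).card} = A (Fin.last n) := by
    ext ω
    simp only [Set.mem_setOf_eq, hAdef, Set.mem_preimage, hBdef, hcnt, hLdef]
    have : (univ.filter fun i : Fin (n + 1) => s i ω < s (Fin.last n) ω).card
        = (univ.filter fun i : Fin n => s i.castSucc ω < s (Fin.last n) ω).card := by
      rw [card_filter, card_filter, Fin.sum_univ_castSucc]
      simp [lt_irrefl]
    rw [this]
  rw [hev]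
  -- final arithmetic
  have hfin : ℙ (A (Fin.last n)) ≤ ((n + 1 - k : ℕ) : ℝ≥0∞) / ((n + 1 : ℕ) : ℝ≥0∞) := by
    rw [ENNReal.le_div_iff_mul_le (Or.inl (by exact_mod_cast Nat.succ_ne_zero n))
      (Or.inl (ENNReal.natCast_ne_top _)), mul_comm]
    rw [← hsumeq]
    exact hsum
  refine hfin.trans_eq ?_
  rw [ENNReal.ofReal_div_of_pos (by positivity)]
  congr 1
  · rw [show (n : ℝ) + 1 - k = ((n + 1 - k : ℕ) : ℝ) by
      rw [Nat.cast_sub hk2]; push_cast; ring]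
    exact (ENNReal.ofReal_natCast _).symm
  · rw [show (n : ℝ) + 1 = ((n + 1 : ℕ) : ℝ) by push_cast; ring]
    exact (ENNReal.ofReal_natCast _).symm
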